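/- Let γ > 0, η > 0, and 0 < T < π/(2√(ηγ)). Let e : [0,T] → ℝ be continuous with e(0) = 0, differentiable on (0,T), and satisfying e'(t) ≤ γ·e(t)² + η for all t ∈ (0,T). Then e(t) ≤ √(η/γ) · tan(t√(ηγ)) for all t ∈ [0,T]. -/

import Mathlib

open Set Real Filter Topology

/-- Auxiliary comparison: `e` is dominated by the shifted solution with constant `b > η`. -/
lemma riccati_comp_aux (γ η b s T : ℝ) (hγ : 0 < γ) (hη : 0 < η) (hb : η < b)
    (hs : 0 < s) (hT : 0 < T)
    (hlt : (T + s) * Real.sqrt (b * γ) < Real.pi / 2)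
    (e : ℝ → ℝ) (he_cont : ContinuousOn e (Set.Icc 0 T)) (he0 : e 0 = 0)
    (he_diff : ∀ t ∈ Set.Ioo 0 T, DifferentiableAt ℝ e t)
    (he_ineq : ∀ t ∈ Set.Ioo 0 T, deriv e t ≤ γ * e t ^ 2 + η) :
    ∀ t ∈ Set.Icc 0 T,
      e t ≤ Real.sqrt (b / γ) * Real.tan ((t + s) * Real.sqrt (b * γ)) := by
  have hb0 : 0 < b := hη.trans hb
  set k := Real.sqrt (b * γ) with hk
  set A := Real.sqrt (b / γ) with hA
  have hk0 : 0 < k := Real.sqrt_pos.2 (mul_pos hb0 hγ)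
  have hA0 : 0 < A := Real.sqrt_pos.2 (div_pos hb0 hγ)
  have hAk : A * k = b := by
    have h : b / γ * (b * γ) = b ^ 2 := by field_simp
    rw [hA, hk, ← Real.sqrt_mul (by positivity), h, Real.sqrt_sq hb0.le]
  have hA2 : A ^ 2 = b / γ := Real.sq_sqrt (by positivity)
  -- the barrier function
  set D : ℝ → ℝ := fun t => A * Real.tan ((t + s) * k) with hD
  set D' : ℝ → ℝ := fun t => γ * (D t) ^ 2 + b with hD'
  -- cosine is positive on the relevant range
  have hcos : ∀ x ∈ Set.Icc (0:ℝ) T, 0 < Real.cos ((x + s) * k) := by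
    intro x hx
    apply Real.cos_pos_of_mem_Ioo
    constructor
    · have : 0 < (x + s) * k := mul_pos (by linarith [hx.1]) hk0
      linarith [Real.pi_pos]
    · calc (x + s) * k ≤ (T + s) * k := by
            apply mul_le_mul_of_nonneg_right (by linarith [hx.2]) hk0.le
        _ < Real.pi / 2 := hlt
  -- D has the right derivative
  have hDd : ∀ x ∈ Set.Icc (0:ℝ) T, HasDerivAt D (D' x) x := by
    intro x hx
    have hcx := (hcos x hx).ne'
    have h1 : HasDerivAt (fun t : ℝ => (t + s) * k) k x := by
      simpa using ((hasDerivAt_id x).add_const s).mul_const k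
    have h2 : HasDerivAt Real.tan (1 / Real.cos ((x + s) * k) ^ 2) ((x + s) * k) :=
      Real.hasDerivAt_tan hcx
    have h3 := (h2.comp x h1).const_mul A
    convert h3 using 1
    case e'_4 => rfl
    case e'_5 => rfl
    case e'_8 => rfl
    have htan : 1 / Real.cos ((x + s) * k) ^ 2 = 1 + Real.tan ((x + s) * k) ^ 2 := by
      rw [one_div, ← Real.inv_one_add_tan_sq hcx, inv_inv]
    simp only [hD', hD, Function.comp, htan]
    have h4 : γ * (A * Real.tan ((x + s) * k)) ^ 2 = b * Real.tan ((x + s) * k) ^ 2 := by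
      rw [mul_pow, hA2]; field_simp
    have h5 : A * ((1 + Real.tan ((x + s) * k) ^ 2) * k)
        = b * (1 + Real.tan ((x + s) * k) ^ 2) := by
      rw [mul_comm (1 + _) k, ← mul_assoc, hAk]
    rw [h4, h5]; ring
  -- a bound for e on [0,T]
  obtain ⟨C, hC⟩ := (isCompact_Icc : IsCompact (Set.Icc (0:ℝ) T)).exists_bound_of_continuousOn he_cont
  set M : ℝ := γ * C ^ 2 + η with hM
  set f' : ℝ → ℝ := fun x => if x = 0 then M else deriv e x with hf'def
  have hslope0 : ∀ z ∈ Set.Ioc (0:ℝ) T, slope e 0 z ≤ M := by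
    intro z hz
    obtain ⟨c, hc, hcs⟩ := exists_hasDerivAt_eq_slope e (deriv e) hz.1
      (he_cont.mono (Set.Icc_subset_Icc le_rfl hz.2))
      (fun x hx => ((he_diff x ⟨hx.1, hx.2.trans_le hz.2⟩).hasDerivAt))
    have hcT : c ∈ Set.Ioo 0 T := ⟨hc.1, hc.2.trans_le hz.2⟩
    have h1 : deriv e c ≤ γ * e c ^ 2 + η := he_ineq c hcT
    have h2 : e c ^ 2 ≤ C ^ 2 := by
      have := hC c (Set.Ioo_subset_Icc_self hcT)
      rw [Real.norm_eq_abs] at this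
      calc e c ^ 2 = |e c| ^ 2 := (sq_abs _).symm
        _ ≤ C ^ 2 := by
            apply pow_le_pow_left₀ (abs_nonneg _) this
    have hz' : slope e 0 z = deriv e c := by rw [slope_def_field, hcs]
    rw [hz']
    have := mul_le_mul_of_nonneg_left h2 hγ.le
    rw [hM]; linarith
  have key := image_le_of_liminf_slope_right_lt_deriv_boundary'
    (f := e) (f' := f') (a := 0) (b := T) he_cont
    (by
      -- liminf slope condition
      intro x hx r hr
      rcases eq_or_lt_of_le hx.1 with h0 | h0
      · -- x = 0
        subst h0
        have hM' : M < r := by simpa [hf'def] using hr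
        have hev : ∀ᶠ z in 𝓝[>] (0:ℝ), slope e 0 z < r := by
          filter_upwards [Ioc_mem_nhdsGT_of_mem ⟨le_rfl, hT⟩] with z hz
          exact (hslope0 z hz).trans_lt hM'
        exact hev.frequently
      · -- 0 < x
        have hxI : x ∈ Set.Ioo 0 T := ⟨h0, hx.2⟩
        have hd := (he_diff x hxI).hasDerivAt
        have hr' : deriv e x < r := by
          simpa [hf'def, h0.ne'] using hr
        have h1 := hasDerivAt_iff_tendsto_slope.1 hd
        have h2 : Filter.Tendsto (slope e x) (𝓝[>] x) (𝓝 (deriv e x)) :=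
          h1.mono_left (nhdsWithin_mono x (by intro z hz; exact ne_of_gt hz))
        exact (h2.eventually_lt_const hr').frequently
    )
    (by
      -- e 0 ≤ D 0
      rw [he0, hD]
      have : 0 < Real.tan ((0 + s) * k) := by
        apply Real.tan_pos_of_pos_of_lt_pi_div_two (by positivity)
        calc (0 + s) * k ≤ (T + s) * k := by
              apply mul_le_mul_of_nonneg_right (by linarith) hk0.le
          _ < Real.pi / 2 := hlt
      positivity)
    (fun x hx => ((hDd x hx).continuousAt.continuousWithinAt))
    (fun x hx => (hDd x (Set.Ico_subset_Icc_self hx)).hasDerivWithinAt)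
    (by
      -- bound at equality points
      intro x hx hxe
      rcases eq_or_lt_of_le hx.1 with h0 | h0
      · -- x = 0 : impossible since D 0 > 0 = e 0
        exfalso
        subst h0
        have : 0 < D 0 := by
          have : 0 < Real.tan ((0 + s) * k) := by
            apply Real.tan_pos_of_pos_of_lt_pi_div_two (by positivity)
            calc (0 + s) * k ≤ (T + s) * k := by
                  apply mul_le_mul_of_nonneg_right (by linarith) hk0.le
              _ < Real.pi / 2 := hlt
          simpa [hD] using mul_pos hA0 this
        rw [← hxe, he0] at this
        exact lt_irrefl 0 this
      · have hxI : x ∈ Set.Ioo 0 T := ⟨h0, hx.2⟩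
        have h1 : deriv e x ≤ γ * e x ^ 2 + η := he_ineq x hxI
        have : f' x = deriv e x := by simp [hf'def, h0.ne']
        rw [this]
        rw [hxe] at h1
        simp only [hD']
        linarith)
  exact key

theorem riccati_comparison (γ η T : ℝ) (hγ : 0 < γ) (hη : 0 < η)
    (hT : 0 < T) (hTlt : T < Real.pi / (2 * Real.sqrt (η * γ)))
    (e : ℝ → ℝ) (he_cont : ContinuousOn e (Set.Icc 0 T)) (he0 : e 0 = 0)
    (he_diff : ∀ t ∈ Set.Ioo 0 T, DifferentiableAt ℝ e t)
    (he_ineq : ∀ t ∈ Set.Ioo 0 T, deriv e t ≤ γ * e t ^ 2 + η) :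
    ∀ t ∈ Set.Icc 0 T,
      e t ≤ Real.sqrt (η / γ) * Real.tan (t * Real.sqrt (η * γ)) := by
  have hηγ : 0 < η * γ := mul_pos hη hγ
  have hsq : 0 < Real.sqrt (η * γ) := Real.sqrt_pos.2 hηγ
  have hTk : T * Real.sqrt (η * γ) < Real.pi / 2 := by
    rw [div_mul_eq_div_div] at hTlt
    calc T * Real.sqrt (η * γ) < (Real.pi / 2 / Real.sqrt (η * γ)) * Real.sqrt (η * γ) :=
          mul_lt_mul_of_pos_right hTlt hsq
      _ = Real.pi / 2 := by field_simp
  intro t ht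
  -- e t ≤ D_δ t for δ small; pass to the limit δ → 0⁺
  have hcont : ContinuousAt (fun δ : ℝ =>
      Real.sqrt ((η + δ) / γ) * Real.tan ((t + δ) * Real.sqrt ((η + δ) * γ))) 0 := by
    have hcos : Real.cos ((t + 0) * Real.sqrt ((η + 0) * γ)) ≠ 0 := by
      apply ne_of_gt
      apply Real.cos_pos_of_mem_Ioo
      constructor
      · have h1 : 0 ≤ (t + 0) * Real.sqrt ((η + 0) * γ) := by
          have := ht.1; positivity
        linarith [Real.pi_pos]
      · simp only [add_zero]
        calc t * Real.sqrt (η * γ) ≤ T * Real.sqrt (η * γ) :=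
              mul_le_mul_of_nonneg_right ht.2 hsq.le
          _ < Real.pi / 2 := hTk
    have h1 : ContinuousAt (fun δ : ℝ => (t + δ) * Real.sqrt ((η + δ) * γ)) 0 :=
      ((continuous_const.add continuous_id).mul
        (((continuous_const.add continuous_id).mul continuous_const).sqrt)).continuousAt
    have h2 : ContinuousAt Real.tan ((t + 0) * Real.sqrt ((η + 0) * γ)) :=
      Real.continuousAt_tan.2 hcos
    have h3 : ContinuousAt (fun δ : ℝ => Real.tan ((t + δ) * Real.sqrt ((η + δ) * γ))) 0 :=
      ContinuousAt.comp (g := Real.tan) h2 h1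
    exact ContinuousAt.mul
      ((continuous_const.add continuous_id).div_const γ).continuousAt.sqrt h3
  have htend : Filter.Tendsto (fun δ : ℝ =>
      Real.sqrt ((η + δ) / γ) * Real.tan ((t + δ) * Real.sqrt ((η + δ) * γ)))
      (𝓝[>] 0) (𝓝 (Real.sqrt (η / γ) * Real.tan (t * Real.sqrt (η * γ)))) := by
    have := hcont.tendsto.mono_left (nhdsWithin_le_nhds (s := Set.Ioi (0:ℝ)))
    simpa using this
  apply ge_of_tendsto htend
  -- eventually in δ, e t ≤ D_δ t
  have hsmall : ∀ᶠ δ in 𝓝[>] (0:ℝ), (T + δ) * Real.sqrt ((η + δ) * γ) < Real.pi / 2 := by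
    have hc : ContinuousAt (fun δ : ℝ => (T + δ) * Real.sqrt ((η + δ) * γ)) 0 :=
      ((continuous_const.add continuous_id).mul
        (((continuous_const.add continuous_id).mul continuous_const).sqrt)).continuousAt
    have := hc.tendsto.mono_left (nhdsWithin_le_nhds (s := Set.Ioi (0:ℝ)))
    simp only [add_zero] at this
    exact this.eventually_lt_const hTk
  filter_upwards [hsmall, self_mem_nhdsWithin] with δ hδ1 (hδ2 : 0 < δ)
  exact riccati_comp_aux γ η (η + δ) δ T hγ hη (by linarith) hδ2 hT hδ1
    e he_cont he0 he_diff he_ineq t ht
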